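/- Let G be a finite group admitting an automorphism φ of prime order p with p coprime to |G| and [G, φ] = G. Let (M_k, L_k) be the upper nonsoluble series of G and (μ_i, λ_i) the upper nonsoluble series of C_G(φ). Fix k, and let {S_1, …, S_p} be a nontrivial orbit of φ on the set of subnormal simple factors of U_k = L_k/M_k; set S = S_1 × … × S_p and let D = C_S(φ) be the diagonal subgroup, a nonabelian simple group isomorphic to S_1. Then there exists an index i such that: for every φ-invariant subgroup F of G with F·M_k/M_k ≥ D, there exists a subgroup D̂ ≤ C_F(φ) with (1) D̂·M_k/M_k = D, (2) D̂ ≤ λ_i · M_k, and (3) D̂ is not contained in μ_i · M_k. -/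

import Mathlib

universe u v

/-- A subgroup `H` of `G` is *subnormal* if there is a chain of subgroups
`H = C_0 ≤ C_1 ≤ … ≤ C_n = G` with each `C_i` normal in `C_{i+1}`. -/
def IsSubnormal {G : Type*} [Group G] (H : Subgroup G) : Prop :=
  ∃ (n : ℕ) (c : ℕ → Subgroup G), c 0 = H ∧ c n = ⊤ ∧
    ∀ i, i < n → c i ≤ c (i + 1) ∧ ((c i).subgroupOf (c (i + 1))).Normal

/-- A magma is nonabelian if some two elements do not commute. -/
def IsNonabelian (X : Type*) [Mul X] : Prop := ∃ a b : X, a * b ≠ b * a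

/-- A group is quasisimple if it is perfect and its central quotient is a
nonabelian simple group. -/
def IsQuasisimple (Q : Type*) [Group Q] : Prop :=
  commutator Q = ⊤ ∧ IsSimpleGroup (Q ⧸ Subgroup.center Q) ∧
    IsNonabelian (Q ⧸ Subgroup.center Q)

/-- The Fitting subgroup of a group: the subgroup generated by (for a finite group,
the product of) all nilpotent normal subgroups. -/
def fittingSubgroup (G : Type*) [Group G] : Subgroup G :=
  sSup {H : Subgroup G | H.Normal ∧ Group.IsNilpotent H}

/-- The generalized Fitting subgroup `F*(G)`: the product of the Fitting subgroup
and all subnormal quasisimple subgroups.  (The generating set below is closed under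
conjugation, so its normal closure coincides with the subgroup it generates.) -/
def genFitting (G : Type*) [Group G] : Subgroup G :=
  Subgroup.normalClosure
    ((fittingSubgroup G : Set G) ∪
      {x | ∃ Q : Subgroup G, IsSubnormal Q ∧ IsQuasisimple ↥Q ∧ x ∈ Q})

instance genFitting_normal (G : Type*) [Group G] : (genFitting G).Normal :=
  Subgroup.normalClosure_normal

/-- The soluble radical of a group: the subgroup generated by (for a finite group,
the largest of) all soluble normal subgroups. -/
def solubleRadical (G : Type*) [Group G] : Subgroup G :=
  Subgroup.normalClosure {x | ∃ H : Subgroup G, H.Normal ∧ IsSolvable ↥H ∧ x ∈ H}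

instance solubleRadical_normal (G : Type*) [Group G] : (solubleRadical G).Normal :=
  Subgroup.normalClosure_normal

/-- The generalized Fitting series, bundled with the proof of normality of its terms:
`F*_0(G) = ⊥` and `F*_{n+1}(G)` is the full preimage in `G` of `F*(G/F*_n(G))`. -/
def genFittingSeriesAux (G : Type u) [Group G] : ℕ → {H : Subgroup G // H.Normal}
  | 0 => ⟨⊥, inferInstance⟩
  | n + 1 =>
    let P := genFittingSeriesAux G n
    haveI := P.2
    ⟨(genFitting (G ⧸ P.1)).comap (QuotientGroup.mk' P.1),
      Subgroup.Normal.comap inferInstance _⟩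

/-- The generalized Fitting series of `G`: `F*_1(G) = F*(G)` and `F*_{n+1}(G)` is the
full preimage in `G` of `F*(G/F*_n(G))`. -/
def genFittingSeries (G : Type u) [Group G] (n : ℕ) : Subgroup G :=
  (genFittingSeriesAux G n).1

instance genFittingSeries_normal (G : Type u) [Group G] (n : ℕ) :
    (genFittingSeries G n).Normal :=
  (genFittingSeriesAux G n).2

/-- The generalized Fitting height `h*(G)`: the least `h` with `F*_h(G) = G`. -/
noncomputable def genFittingHeight (G : Type u) [Group G] : ℕ :=
  sInf {h : ℕ | genFittingSeries G h = ⊤}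

/-- The fixed-point subgroup `C_G(φ)` of an automorphism `φ` of `G`. -/
def autFixedSubgroup {G : Type*} [Group G] (φ : G ≃* G) : Subgroup G where
  carrier := {g | φ g = g}
  one_mem' := map_one φ
  mul_mem' := fun {a b} ha hb => by
    simp only [Set.mem_setOf_eq] at *; rw [map_mul, ha, hb]
  inv_mem' := fun {a} ha => by
    simp only [Set.mem_setOf_eq] at *; rw [map_inv, ha]

/-- The fixed-point subgroup `C_G(A)` of a group `A` acting on `G` by automorphisms
via `ρ : A →* MulAut G`. -/
def actionFixedSubgroup {A G : Type*} [Group A] [Group G] (ρ : A →* MulAut G) :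
    Subgroup G where
  carrier := {g | ∀ a : A, ρ a g = g}
  one_mem' := fun a => map_one (ρ a)
  mul_mem' := fun {x y} hx hy a => by
    rw [map_mul, hx a, hy a]
  inv_mem' := fun {x} hx a => by
    rw [map_inv, hx a]

/-- The subgroup `[G, φ]` generated by all `g⁻¹ * φ(g)`. -/
def autCommutator {G : Type*} [Group G] (φ : G ≃* G) : Subgroup G :=
  Subgroup.closure {x | ∃ g : G, x = g⁻¹ * φ g}

/-- `X` is a (nonempty) direct product of nonabelian simple groups. -/
def IsNonabelianSimpleProduct (X : Type*) [Group X] : Prop :=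
  ∃ (ι : Type) (f : ι → Type) (inst : ∀ i : ι, Group (f i)),
    Nonempty ι ∧
    (∀ i : ι, letI := inst i
      IsSimpleGroup (f i) ∧ IsNonabelian (f i)) ∧
    (letI : ∀ i : ι, Group (f i) := inst
     Nonempty (X ≃* ∀ i : ι, f i))

/-- For subgroups `A ≤ B` of `G` with `A` normalized by `B`, the factor group `B/A`
is soluble; expressed via a surjective homomorphism with kernel `A` (viewed in `B`). -/
def FactorSolvable {G : Type u} [Group G] (A B : Subgroup G) : Prop :=
  ∃ (X : Type u) (inst : Group X),
    letI := inst
    ∃ f : ↥B →* X, Function.Surjective f ∧ f.ker = A.subgroupOf B ∧ IsSolvable X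

/-- For subgroups `A ≤ B` of `G` with `A` normalized by `B`, the factor group `B/A`
is a (nonempty) direct product of nonabelian simple groups. -/
def FactorNonabelianSimpleProduct {G : Type u} [Group G] (A B : Subgroup G) : Prop :=
  ∃ (X : Type u) (inst : Group X),
    letI := inst
    ∃ f : ↥B →* X, Function.Surjective f ∧ f.ker = A.subgroupOf B ∧
      IsNonabelianSimpleProduct X

/-- The nonsoluble length `λ(G)`: the minimum `h` such that `G` has a normal series
`1 = G_0 ≤ G_1 ≤ … ≤ G_{2h+1} = G` in which for `i` even the factor `G_{i+1}/G_i` is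
soluble (possibly trivial), and for `i` odd the factor `G_{i+1}/G_i` is a (nonempty)
direct product of nonabelian simple groups. -/
noncomputable def nonsolubleLength (G : Type u) [Group G] : ℕ :=
  sInf {h : ℕ | ∃ c : ℕ → Subgroup G,
    c 0 = ⊥ ∧ c (2 * h + 1) = ⊤ ∧ (∀ i, (c i).Normal) ∧ (∀ i, c i ≤ c (i + 1)) ∧
    (∀ i < 2 * h + 1, Even i → FactorSolvable (c i) (c (i + 1))) ∧
    (∀ i < 2 * h + 1, ¬ Even i → FactorNonabelianSimpleProduct (c i) (c (i + 1)))}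

/-- The upper nonsoluble series of `G`, bundled with normality: the value at `n` is the
pair `(M_n, L_n)`, where `M_{n+1}` is the full preimage in `G` of the soluble radical of
`G/L_n` and `L_{n+1}` is the full preimage in `G` of `F*(G/M_{n+1})`; here `L_0 = ⊥`
(and `M_0 = ⊥` is a dummy value). -/
def upperNSAux (G : Type u) [Group G] :
    ℕ → {H : Subgroup G // H.Normal} × {H : Subgroup G // H.Normal}
  | 0 => (⟨⊥, inferInstance⟩, ⟨⊥, inferInstance⟩)
  | n + 1 =>
    let Lp := (upperNSAux G n).2
    haveI := Lp.2
    let M : {H : Subgroup G // H.Normal} :=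
      ⟨(solubleRadical (G ⧸ Lp.1)).comap (QuotientGroup.mk' Lp.1),
        Subgroup.Normal.comap inferInstance _⟩
    haveI := M.2
    (M, ⟨(genFitting (G ⧸ M.1)).comap (QuotientGroup.mk' M.1),
      Subgroup.Normal.comap inferInstance _⟩)

/-- The term `M_k` of the upper nonsoluble series (for `k ≥ 1`); `M_1` is the soluble
radical of `G`. -/
def upperM (G : Type u) [Group G] (k : ℕ) : Subgroup G := (upperNSAux G k).1.1

/-- The term `L_k` of the upper nonsoluble series; `L_0 = ⊥` and `L_k` is the full
preimage in `G` of `F*(G/M_k)`. -/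
def upperL (G : Type u) [Group G] (k : ℕ) : Subgroup G := (upperNSAux G k).2.1

instance upperM_normal (G : Type u) [Group G] (k : ℕ) : (upperM G k).Normal :=
  (upperNSAux G k).1.2

instance upperL_normal (G : Type u) [Group G] (k : ℕ) : (upperL G k).Normal :=
  (upperNSAux G k).2.2

/-- The kernel of the conjugation action of a group `H` permuting its subnormal
nonabelian simple subgroups. -/
def simplePermKernel (H : Type u) [Group H] : Subgroup H where
  carrier := {g | ∀ T : Subgroup H, IsSubnormal T → IsSimpleGroup ↥T → IsNonabelian ↥T →
    T.map (MulAut.conj g).toMonoidHom = T}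
  one_mem' := by
    intro T _ _ _
    have h1 : (MulAut.conj (1 : H)).toMonoidHom = MonoidHom.id H := by
      ext x; simp
    rw [h1, Subgroup.map_id]
  mul_mem' := by
    intro a b ha hb T h1 h2 h3
    have hab : (MulAut.conj (a * b)).toMonoidHom =
        (MulAut.conj a).toMonoidHom.comp (MulAut.conj b).toMonoidHom := by
      ext x; simp [mul_assoc]
    rw [hab, ← Subgroup.map_map, hb T h1 h2 h3, ha T h1 h2 h3]
  inv_mem' := by
    intro a ha T h1 h2 h3
    have h := ha T h1 h2 h3
    have hcomp : (MulAut.conj a⁻¹).toMonoidHom.comp (MulAut.conj a).toMonoidHom =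
        MonoidHom.id H := by
      ext x; simp; group
    calc T.map (MulAut.conj a⁻¹).toMonoidHom
        = (T.map (MulAut.conj a).toMonoidHom).map (MulAut.conj a⁻¹).toMonoidHom := by
          rw [h]
      _ = T.map ((MulAut.conj a⁻¹).toMonoidHom.comp (MulAut.conj a).toMonoidHom) :=
          Subgroup.map_map _ _ _
      _ = T := by rw [hcomp, Subgroup.map_id]

open scoped commutatorElement

section ChainBasics

variable {G : Type v} [Group G]

/-- A subnormal chain ending at `⊤`, with normality expressed by conjugation. -/
def SubChain (c : ℕ → Subgroup G) (n : ℕ) : Prop :=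
  c n = ⊤ ∧ ∀ i < n, c i ≤ c (i + 1) ∧ ∀ x ∈ c (i + 1), ∀ y ∈ c i, x * y * x⁻¹ ∈ c i

lemma subchain_mono {c : ℕ → Subgroup G} {n : ℕ} (h : SubChain c n) :
    ∀ {i j : ℕ}, i ≤ j → j ≤ n → c i ≤ c j := by
  intro i j hij hjn
  induction j with
  | zero => simp_all [Nat.le_zero.mp hij]
  | succ m ih =>
    rcases Nat.lt_or_ge i (m+1) with hlt | hge
    · exact le_trans (ih (Nat.lt_succ_iff.mp hlt) (le_trans (Nat.le_succ m) hjn))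
        ((h.2 m (Nat.lt_of_lt_of_le (Nat.lt_succ_self m) hjn)).1)
    · have : i = m + 1 := le_antisymm hij hge
      simp [this]

lemma isSubnormal_of_subchain {S : Subgroup G} {c : ℕ → Subgroup G} {n : ℕ}
    (h0 : c 0 = S) (h : SubChain c n) : IsSubnormal S := by
  refine ⟨n, c, h0, h.1, fun i hi => ⟨(h.2 i hi).1, ⟨?_⟩⟩⟩
  rintro ⟨y, hyc⟩ hy ⟨x, hxc⟩
  exact (h.2 i hi).2 x hxc y hy

lemma subchain_of_isSubnormal {S : Subgroup G} (h : IsSubnormal S) :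
    ∃ (n : ℕ) (c : ℕ → Subgroup G), c 0 = S ∧ SubChain c n := by
  obtain ⟨n, c, h0, htop, hstep⟩ := h
  refine ⟨n, c, h0, htop, fun i hi => ⟨(hstep i hi).1, fun x hx y hy => ?_⟩⟩
  have := (hstep i hi).2.conj_mem ⟨y, (hstep i hi).1 hy⟩ hy ⟨x, hx⟩
  exact this

/-- Restriction of a subnormal chain to a subgroup `B`. -/
lemma subchain_subgroupOf {c : ℕ → Subgroup G} {n : ℕ} (h : SubChain c n) (B : Subgroup G) :
    SubChain (fun i => (c i).subgroupOf B) n := by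
  constructor
  · simp [h.1, Subgroup.subgroupOf, Subgroup.comap_top]
  · intro i hi
    refine ⟨fun x hx => (h.2 i hi).1 hx, ?_⟩
    rintro ⟨x, hxB⟩ hx ⟨y, hyB⟩ hy
    exact (h.2 i hi).2 x hx y hy

/-- Truncation of a subnormal chain: the chain for `S` inside the penultimate term. -/
lemma subchain_trunc {c : ℕ → Subgroup G} {n : ℕ} (h : SubChain c (n+1)) :
    SubChain (fun i => (c i).subgroupOf (c n)) n := by
  constructor
  · exact Subgroup.subgroupOf_self (c n)
  · intro i hi
    refine ⟨fun x hx => (h.2 i (Nat.lt_succ_of_lt hi)).1 hx, ?_⟩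
    rintro ⟨x, hxB⟩ hx ⟨y, hyB⟩ hy
    exact (h.2 i (Nat.lt_succ_of_lt hi)).2 x hx y hy

lemma IsNonabelian.of_mulEquiv {A B : Type*} [Group A] [Group B] (e : A ≃* B)
    (h : IsNonabelian A) : IsNonabelian B := by
  obtain ⟨a, b, hab⟩ := h
  exact ⟨e a, e b, by rw [← map_mul, ← map_mul]; exact fun hc => hab (e.injective hc)⟩

lemma isSimpleGroup_of_mulEquiv {A B : Type*} [Group A] [Group B] (e : A ≃* B)
    (h : IsSimpleGroup A) : IsSimpleGroup B := by
  haveI := h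
  haveI : Nontrivial B := e.symm.toEquiv.nontrivial
  exact IsSimpleGroup.isSimpleGroup_of_surjective e.toMonoidHom e.surjective

lemma eq_one_of_forall_commute {H : Type*} [Group H] (hs : IsSimpleGroup H)
    (hna : IsNonabelian H) (x : H) (hx : ∀ y : H, x * y = y * x) : x = 1 := by
  have hc : x ∈ Subgroup.center H := Subgroup.mem_center_iff.mpr fun y => (hx y).symm
  rcases (Subgroup.center H).normal_of_characteristic.eq_bot_or_eq_top with hbot | htop
  · rw [hbot] at hc; exact hc
  · obtain ⟨a, b, hab⟩ := hna
    exact absurd ((Subgroup.mem_center_iff.mp (htop ▸ Subgroup.mem_top a : a ∈ _)) b).symm hab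

lemma perfect_of_simple_nonabelian {H : Type*} [Group H] (hs : IsSimpleGroup H)
    (hna : IsNonabelian H) : commutator H = ⊤ := by
  haveI := hs
  rcases (Subgroup.commutator_normal (⊤ : Subgroup H) ⊤).eq_bot_or_eq_top with hbot | htop
  · exfalso
    obtain ⟨a, b, hab⟩ := hna
    have : ⁅a, b⁆ ∈ commutator H :=
      Subgroup.commutator_mem_commutator (Subgroup.mem_top a) (Subgroup.mem_top b)
    rw [commutator, hbot, Subgroup.mem_bot, commutatorElement_eq_one_iff_commute] at this
    exact hab this
  · exact htop

lemma commutator_self_of_simple {S : Subgroup G} (hs : IsSimpleGroup ↥S)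
    (hna : IsNonabelian ↥S) : ⁅S, S⁆ = S := by
  have h1 : (⊤ : Subgroup ↥S).map S.subtype = S := by
    rw [← MonoidHom.range_eq_map, Subgroup.range_subtype]
  calc ⁅S, S⁆ = ⁅(⊤ : Subgroup ↥S).map S.subtype, (⊤ : Subgroup ↥S).map S.subtype⁆ := by
        rw [h1]
    _ = (⁅(⊤ : Subgroup ↥S), (⊤ : Subgroup ↥S)⁆).map S.subtype :=
        (Subgroup.map_commutator _ _ _).symm
    _ = S := by rw [← commutator_def, perfect_of_simple_nonabelian hs hna, h1]

end ChainBasics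

section WielandtLemmas

/-- A subnormal subgroup of a simple group is trivial or everything. -/
lemma subchain_simple_eq_bot_or_top :
    ∀ (n : ℕ) {G : Type v} [Group G], IsSimpleGroup G →
      ∀ (c : ℕ → Subgroup G), SubChain c n → c 0 = ⊥ ∨ c 0 = ⊤ := by
  intro n
  induction n with
  | zero => intro G _ _ c hc; exact Or.inr hc.1
  | succ m ih =>
    intro G _ hG c hc
    have hnormal : (c m).Normal := by
      refine ⟨fun y hy x => ?_⟩
      exact (hc.2 m (Nat.lt_succ_self m)).2 x (by rw [hc.1]; trivial) y hy
    haveI := hG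
    rcases hnormal.eq_bot_or_eq_top with hbot | htop
    · left
      have := subchain_mono hc (Nat.zero_le m) (Nat.le_succ m)
      rw [hbot] at this
      exact le_bot_iff.mp this
    · exact ih hG c ⟨htop, fun i hi => hc.2 i (Nat.lt_succ_of_lt hi)⟩

/-- Wielandt-type lemma: a subnormal nonabelian simple subgroup is contained in, or
centralizes, any normal subgroup. -/
lemma subnormal_simple_le_or_commutator_bot :
    ∀ (n : ℕ) {G : Type v} [Group G] (S N : Subgroup G) (c : ℕ → Subgroup G),
      c 0 = S → SubChain c n → IsSimpleGroup ↥S → IsNonabelian ↥S → N.Normal →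
      S ≤ N ∨ ⁅S, N⁆ = ⊥ := by
  intro n
  induction n with
  | zero =>
    intro G _ S N c h0 hc hs hna hN
    have hStop : S = ⊤ := h0 ▸ hc.1
    haveI : IsSimpleGroup G :=
      isSimpleGroup_of_mulEquiv (Subgroup.topEquiv) (hStop ▸ hs)
    rcases hN.eq_bot_or_eq_top with hbot | htop
    · right
      rw [hbot, eq_bot_iff]
      refine Subgroup.commutator_le.mpr fun g₁ _ g₂ hg₂ => ?_
      rw [Subgroup.mem_bot] at hg₂
      simp [hg₂]
    · left; rw [htop]; exact le_top
  | succ n ih =>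
    intro G _ S N c h0 hc hs hna hN
    set B := c n with hBdef
    have hBnormal : B.Normal := by
      refine ⟨fun y hy x => ?_⟩
      exact (hc.2 n (Nat.lt_succ_self n)).2 x (by rw [hc.1]; trivial) y hy
    have hSB : S ≤ B := h0 ▸ subchain_mono hc (Nat.zero_le n) (Nat.le_succ n)
    -- restrict to B
    have hchain' : SubChain (fun i => (c i).subgroupOf B) n := subchain_trunc hc
    have h0' : (fun i => (c i).subgroupOf B) 0 = S.subgroupOf B := by simp [h0]
    have hN' : (N.subgroupOf B).Normal := by
      refine ⟨fun y hy x => ?_⟩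
      rw [Subgroup.mem_subgroupOf] at hy ⊢
      exact hN.conj_mem _ hy _
    have e := Subgroup.subgroupOfEquivOfLe hSB
    rcases ih (S.subgroupOf B) (N.subgroupOf B) _ h0' hchain'
        (isSimpleGroup_of_mulEquiv e.symm hs) (hna.of_mulEquiv e.symm) hN' with hle | hcomm
    · left
      intro s hsS
      have : (⟨s, hSB hsS⟩ : ↥B) ∈ S.subgroupOf B := by
        rw [Subgroup.mem_subgroupOf]; exact hsS
      exact Subgroup.mem_subgroupOf.mp (hle this)
    · right
      -- elements of S commute with elements of N ⊓ B
      have hcommel : ∀ s ∈ S, ∀ m ∈ N ⊓ B, s * m = m * s := by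
        intro s hsS m hm
        have h1 : (⟨s, hSB hsS⟩ : ↥B) ∈ S.subgroupOf B := Subgroup.mem_subgroupOf.mpr hsS
        have h2 : (⟨m, hm.2⟩ : ↥B) ∈ N.subgroupOf B := Subgroup.mem_subgroupOf.mpr hm.1
        have := Subgroup.commutator_mem_commutator h1 h2
        rw [hcomm, Subgroup.mem_bot] at this
        have : ((⁅(⟨s, hSB hsS⟩ : ↥B), (⟨m, hm.2⟩ : ↥B)⁆ : ↥B) : G) = 1 := by
          rw [this]; rfl
        have : ⁅s, m⁆ = 1 := this
        exact commutatorElement_eq_one_iff_commute.mp this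
      have hSX : ⁅S, N ⊓ B⁆ = ⊥ := by
        rw [eq_bot_iff]
        exact Subgroup.commutator_le.mpr fun s hsS m hm => by
          rw [Subgroup.mem_bot, commutatorElement_eq_one_iff_commute]
          exact hcommel s hsS m hm
      have hXS : ⁅N ⊓ B, S⁆ = ⊥ := by
        rw [eq_bot_iff]
        exact Subgroup.commutator_le.mpr fun m hm s hsS => by
          rw [Subgroup.mem_bot, commutatorElement_eq_one_iff_commute]
          exact (hcommel s hsS m hm).symm
      have hSN_le : ⁅S, N⁆ ≤ N ⊓ B := by
        refine Subgroup.commutator_le.mpr fun s hsS m hmN => Subgroup.mem_inf.mpr ⟨?_, ?_⟩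
        · have h1 : s * m * s⁻¹ ∈ N := hN.conj_mem m hmN s
          have : ⁅s, m⁆ = (s * m * s⁻¹) * m⁻¹ := by group
          rw [this]
          exact mul_mem h1 (inv_mem hmN)
        · have h1 : m * s⁻¹ * m⁻¹ ∈ B := hBnormal.conj_mem s⁻¹ (inv_mem (hSB hsS)) m
          have : ⁅s, m⁆ = s * (m * s⁻¹ * m⁻¹) := by group
          rw [this]
          exact mul_mem (hSB hsS) h1
      have hNS_le : ⁅N, S⁆ ≤ N ⊓ B := by
        refine Subgroup.commutator_le.mpr fun m hmN s hsS => Subgroup.mem_inf.mpr ⟨?_, ?_⟩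
        · have h1 : s * m⁻¹ * s⁻¹ ∈ N := hN.conj_mem m⁻¹ (inv_mem hmN) s
          have : ⁅m, s⁆ = m * (s * m⁻¹ * s⁻¹) := by group
          rw [this]
          exact mul_mem hmN h1
        · have h1 : m * s * m⁻¹ ∈ B := hBnormal.conj_mem s (hSB hsS) m
          have : ⁅m, s⁆ = (m * s * m⁻¹) * s⁻¹ := by group
          rw [this]
          exact mul_mem h1 (inv_mem (hSB hsS))
      have h1 : ⁅⁅S, N⁆, S⁆ = ⊥ :=
        le_bot_iff.mp (le_of_le_of_eq (Subgroup.commutator_mono hSN_le le_rfl) hXS)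
      have h2 : ⁅⁅N, S⁆, S⁆ = ⊥ :=
        le_bot_iff.mp (le_of_le_of_eq (Subgroup.commutator_mono hNS_le le_rfl) hXS)
      have h3 : ⁅⁅S, S⁆, N⁆ = ⊥ := Subgroup.commutator_commutator_eq_bot_of_rotate h1 h2
      rwa [commutator_self_of_simple hs hna] at h3

/-- Distinct subnormal nonabelian simple subgroups commute. -/
lemma subnormal_simples_commute :
    ∀ (n : ℕ) {G : Type v} [Group G] (S T : Subgroup G) (cT : ℕ → Subgroup G),
      cT 0 = T → SubChain cT n →
      (∃ (m : ℕ) (cS : ℕ → Subgroup G), cS 0 = S ∧ SubChain cS m) →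
      IsSimpleGroup ↥S → IsNonabelian ↥S → IsSimpleGroup ↥T → S ≠ T →
      ⁅S, T⁆ = ⊥ := by
  intro n
  induction n with
  | zero =>
    intro G _ S T cT h0 hcT hS hsS hnaS hsT hne
    exfalso
    have hTtop : T = ⊤ := h0 ▸ hcT.1
    haveI : IsSimpleGroup G :=
      isSimpleGroup_of_mulEquiv (Subgroup.topEquiv) (hTtop ▸ hsT)
    obtain ⟨m, cS, h0S, hcS⟩ := hS
    rcases subchain_simple_eq_bot_or_top m this cS hcS with hbot | htop
    · rw [h0S] at hbot
      haveI := hsS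
      obtain ⟨⟨x, hx⟩, ⟨y, hy⟩, hxy⟩ := exists_pair_ne ↥S
      apply hxy
      have hx1 : x = 1 := by rw [hbot] at hx; exact hx
      have hy1 : y = 1 := by rw [hbot] at hy; exact hy
      simp [Subtype.ext_iff, hx1, hy1]
    · rw [h0S] at htop
      exact hne (htop.trans hTtop.symm)
  | succ n ih =>
    intro G _ S T cT h0 hcT hS hsS hnaS hsT hne
    set B := cT n with hBdef
    have hBnormal : B.Normal := by
      refine ⟨fun y hy x => ?_⟩
      exact (hcT.2 n (Nat.lt_succ_self n)).2 x (by rw [hcT.1]; trivial) y hy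
    have hTB : T ≤ B := h0 ▸ subchain_mono hcT (Nat.zero_le n) (Nat.le_succ n)
    obtain ⟨m, cS, h0S, hcS⟩ := hS
    rcases subnormal_simple_le_or_commutator_bot m S B cS h0S hcS hsS hnaS hBnormal
      with hle | hcomm
    · -- recurse inside B
      have hchainT' : SubChain (fun i => (cT i).subgroupOf B) n := subchain_trunc hcT
      have h0T' : (fun i => (cT i).subgroupOf B) 0 = T.subgroupOf B := by simp [h0]
      have hchainS' : SubChain (fun i => (cS i).subgroupOf B) m := subchain_subgroupOf hcS B
      have h0S' : (fun i => (cS i).subgroupOf B) 0 = S.subgroupOf B := by simp [h0S]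
      have eS := Subgroup.subgroupOfEquivOfLe hle
      have eT := Subgroup.subgroupOfEquivOfLe hTB
      have hne' : S.subgroupOf B ≠ T.subgroupOf B := by
        intro hEq
        apply hne
        have := congrArg (fun (X : Subgroup ↥B) => X.map B.subtype) hEq
        simpa [Subgroup.subgroupOf_map_subtype, inf_eq_left.mpr hle,
          inf_eq_left.mpr hTB] using this
      have := ih (S.subgroupOf B) (T.subgroupOf B) _ h0T' hchainT'
        ⟨m, _, h0S', hchainS'⟩ (isSimpleGroup_of_mulEquiv eS.symm hsS)
        (hnaS.of_mulEquiv eS.symm) (isSimpleGroup_of_mulEquiv eT.symm hsT) hne'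
      rw [eq_bot_iff]
      refine Subgroup.commutator_le.mpr fun s hsS' t htT => ?_
      have h1 : (⟨s, hle hsS'⟩ : ↥B) ∈ S.subgroupOf B := Subgroup.mem_subgroupOf.mpr hsS'
      have h2 : (⟨t, hTB htT⟩ : ↥B) ∈ T.subgroupOf B := Subgroup.mem_subgroupOf.mpr htT
      have hmem := Subgroup.commutator_mem_commutator h1 h2
      rw [this, Subgroup.mem_bot] at hmem
      have : ((⁅(⟨s, hle hsS'⟩ : ↥B), (⟨t, hTB htT⟩ : ↥B)⁆ : ↥B) : G) = 1 := by rw [hmem]; rfl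
      rw [Subgroup.mem_bot]
      exact this
    · rw [eq_bot_iff]
      calc ⁅S, T⁆ ≤ ⁅S, B⁆ := Subgroup.commutator_mono le_rfl hTB
        _ ≤ ⊥ := hcomm.le

end WielandtLemmas

section SolubleRadical

variable {G : Type v} [Group G]

lemma le_solubleRadical {N : Subgroup G} (hN : N.Normal) (hs : IsSolvable ↥N) :
    N ≤ solubleRadical G := fun x hx => Subgroup.subset_normalClosure ⟨N, hN, hs, hx⟩

lemma isSolvable_of_mulEquiv {A B : Type*} [Group A] [Group B] (e : A ≃* B)
    (h : IsSolvable A) : IsSolvable B := by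
  haveI : Group.IsSolvable A := h
  exact solvable_of_surjective (f := e.toMonoidHom) e.surjective

lemma isSolvable_bot : IsSolvable ↥(⊥ : Subgroup G) := by
  constructor
  exact ⟨0, Subsingleton.elim _ _⟩

/-- The join of two normal solvable subgroups is solvable. -/
lemma sup_normal_solvable {H K : Subgroup G} (hH : H.Normal) (hK : K.Normal)
    (sH : IsSolvable ↥H) (sK : IsSolvable ↥K) :
    (H ⊔ K).Normal ∧ IsSolvable ↥(H ⊔ K) := by
  haveI := hH; haveI := hK; haveI : Group.IsSolvable H := sH; haveI : Group.IsSolvable K := sK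
  refine ⟨Subgroup.sup_normal H K, ?_⟩
  -- map to G ⧸ H
  set q : ↥(H ⊔ K) →* G ⧸ H := (QuotientGroup.mk' H).comp (H ⊔ K).subtype with hq
  set r : ↥K →* G ⧸ H := (QuotientGroup.mk' H).comp K.subtype with hr
  have hrange : q.range = r.range := by
    have h1 : q.range = (H ⊔ K).map (QuotientGroup.mk' H) := by
      rw [MonoidHom.range_eq_map, hq, ← Subgroup.map_map, ← MonoidHom.range_eq_map,
        Subgroup.range_subtype]
    have h2 : r.range = K.map (QuotientGroup.mk' H) := by
      rw [MonoidHom.range_eq_map, hr, ← Subgroup.map_map, ← MonoidHom.range_eq_map,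
        Subgroup.range_subtype]
    have h3 : H.map (QuotientGroup.mk' H) = ⊥ := by
      rw [eq_bot_iff]
      rintro x ⟨y, hy, rfl⟩
      rw [Subgroup.mem_bot]
      exact (QuotientGroup.eq_one_iff y).mpr hy
    rw [h1, h2, Subgroup.map_sup, h3, bot_sup_eq]
  haveI hsolr : Group.IsSolvable ↥r.range := solvable_of_surjective r.rangeRestrict_surjective
  haveI hsolq : Group.IsSolvable ↥q.range := by rw [hrange]; exact hsolr
  refine solvable_of_ker_le_range (Subgroup.inclusion (le_sup_left : H ≤ H ⊔ K))
    q.rangeRestrict ?_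
  intro x hx
  have hxH : (x : G) ∈ H := by
    have : q x = 1 := by
      have := congrArg (Subgroup.subtype q.range) (show q.rangeRestrict x = 1 from hx)
      simpa using this
    exact (QuotientGroup.eq_one_iff _).mp this
  exact ⟨⟨(x : G), hxH⟩, Subtype.ext rfl⟩

variable (G) in
lemma solubleRadical_spec [Finite G] :
    (solubleRadical G).Normal ∧ IsSolvable ↥(solubleRadical G) := by
  classical
  set S : Set (Subgroup G) := {H | H.Normal ∧ IsSolvable ↥H} with hS
  obtain ⟨R, hR, hmax⟩ := Set.Finite.exists_maximalFor id S (Set.toFinite S)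
    ⟨⊥, ⟨inferInstance, isSolvable_bot⟩⟩
  have hall : ∀ N ∈ S, N ≤ R := by
    intro N hN
    have hsup : R ⊔ N ∈ S := by
      obtain ⟨h1, h2⟩ := sup_normal_solvable hR.1 hN.1 hR.2 hN.2
      exact ⟨h1, h2⟩
    have := hmax hsup le_sup_left
    simp only [id] at this
    exact le_sup_right.trans this
  have hrad : solubleRadical G = R := by
    apply le_antisymm
    · haveI := hR.1
      apply Subgroup.normalClosure_le_normal
      rintro x ⟨H, hH, hsolv, hx⟩
      exact hall H ⟨hH, hsolv⟩ hx
    · exact le_solubleRadical hR.1 hR.2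
  rw [hrad]
  exact hR

variable (G) in
lemma isSolvable_solubleRadical [Finite G] : IsSolvable ↥(solubleRadical G) :=
  (solubleRadical_spec G).2

end SolubleRadical

section RadicalTrivial

variable {G : Type v} [Group G]

/-- Conjugation restricted to a normal subgroup, as an automorphism of the subgroup. -/
def conjNormal (g : G) (B : Subgroup G) (hB : B.Normal) : ↥B ≃* ↥B where
  toFun b := ⟨g * b * g⁻¹, hB.conj_mem b b.2 g⟩
  invFun b := ⟨g⁻¹ * b * g, by simpa using hB.conj_mem b b.2 g⁻¹⟩
  left_inv b := by ext; simp; group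
  right_inv b := by ext; simp; group
  map_mul' a b := by ext; simp

lemma conjNormal_solubleRadical_stable [Finite G] (g : G) (B : Subgroup G) (hB : B.Normal) :
    (solubleRadical ↥B).map (conjNormal g B hB).toMonoidHom ≤ solubleRadical ↥B := by
  apply le_solubleRadical
  · -- image of a normal subgroup under an automorphism is normal
    refine ⟨?_⟩
    rintro x ⟨y, hy, rfl⟩ b
    refine ⟨(conjNormal g B hB).symm b * y * ((conjNormal g B hB).symm b)⁻¹,
      (solubleRadical_normal ↥B).conj_mem y hy _, ?_⟩
    simp only [MulEquiv.coe_toMonoidHom, map_mul, map_inv, MulEquiv.apply_symm_apply]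
  · exact isSolvable_of_mulEquiv
      (Subgroup.equivMapOfInjective _ _ (conjNormal g B hB).injective)
      (isSolvable_solubleRadical ↥B)

/-- If the soluble radical of a finite group is trivial, there are no nontrivial solvable
subnormal subgroups. -/
lemma subnormal_solvable_eq_bot :
    ∀ (n : ℕ) {G : Type v} [Group G] [Finite G], solubleRadical G = ⊥ →
      ∀ (c : ℕ → Subgroup G) (T : Subgroup G), c 0 = T → SubChain c n →
      IsSolvable ↥T → T = ⊥ := by
  intro n
  induction n with
  | zero =>
    intro G _ _ hrad c T h0 hc hsolv
    have hT : T = ⊤ := h0 ▸ hc.1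
    have : T ≤ solubleRadical G := le_solubleRadical (hT ▸ inferInstance) hsolv
    rw [hrad] at this
    exact le_bot_iff.mp this
  | succ n ih =>
    intro G _ _ hrad c T h0 hc hsolv
    set B := c n with hBdef
    have hBnormal : B.Normal := by
      refine ⟨fun y hy x => ?_⟩
      exact (hc.2 n (Nat.lt_succ_self n)).2 x (by rw [hc.1]; trivial) y hy
    have hTB : T ≤ B := h0 ▸ subchain_mono hc (Nat.zero_le n) (Nat.le_succ n)
    -- the soluble radical of B is trivial
    have hradB : solubleRadical ↥B = ⊥ := by
      have hmapbot : (solubleRadical ↥B).map B.subtype ≤ solubleRadical G := by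
        apply le_solubleRadical
        · refine ⟨?_⟩
          rintro x ⟨y, hy, rfl⟩ g
          refine ⟨(conjNormal g B hBnormal) y,
            conjNormal_solubleRadical_stable g B hBnormal ⟨y, hy, rfl⟩, rfl⟩
        · exact isSolvable_of_mulEquiv
            (Subgroup.equivMapOfInjective _ _ (Subgroup.subtype_injective B))
            (isSolvable_solubleRadical ↥B)
      rw [hrad, le_bot_iff] at hmapbot
      rw [eq_bot_iff]
      intro x hx
      have : (x : G) ∈ (solubleRadical ↥B).map B.subtype := ⟨x, hx, rfl⟩
      rw [hmapbot, Subgroup.mem_bot] at this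
      exact Subtype.ext this
    -- restrict T into B and recurse
    have hchain' : SubChain (fun i => (c i).subgroupOf B) n := subchain_trunc hc
    have h0' : (fun i => (c i).subgroupOf B) 0 = T.subgroupOf B := by simp [h0]
    have hsolv' : IsSolvable ↥(T.subgroupOf B) :=
      isSolvable_of_mulEquiv (Subgroup.subgroupOfEquivOfLe hTB).symm hsolv
    have hbot' := ih hradB _ _ h0' hchain' hsolv'
    rw [eq_bot_iff]
    intro t ht
    have : (⟨t, hTB ht⟩ : ↥B) ∈ T.subgroupOf B := Subgroup.mem_subgroupOf.mpr ht
    rw [hbot', Subgroup.mem_bot] at this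
    rw [Subgroup.mem_bot]
    exact congrArg Subtype.val this

/-- A finite group with trivial soluble radical and trivial generalized Fitting subgroup
is trivial. -/
lemma subsingleton_of_radicals_eq_bot [Finite G]
    (h1 : solubleRadical G = ⊥) (h2 : genFitting G = ⊥) : Subsingleton G := by
  by_contra hcon
  rw [not_subsingleton_iff_nontrivial] at hcon
  classical
  set 𝒯 : Set (Subgroup G) := {T | T ≠ ⊥ ∧ ∃ (n : ℕ) (c : ℕ → Subgroup G), c 0 = T ∧ SubChain c n}
    with h𝒯
  have htop𝒯 : (⊤ : Subgroup G) ∈ 𝒯 := by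
    refine ⟨?_, 0, fun _ => ⊤, rfl, rfl, by omega⟩
    intro h
    obtain ⟨x, hx⟩ := exists_ne (1 : G)
    have : x ∈ (⊥ : Subgroup G) := h ▸ Subgroup.mem_top x
    exact hx (Subgroup.mem_bot.mp this)
  obtain ⟨T, hT, hmin⟩ := Set.Finite.exists_minimalFor id 𝒯 (Set.toFinite 𝒯) ⟨⊤, htop𝒯⟩
  obtain ⟨hTne, nT, cT, h0T, hcT⟩ := hT
  haveI hTnontriv : Nontrivial ↥T := (Subgroup.nontrivial_iff_ne_bot T).mpr hTne
  -- T is simple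
  have hsimple : IsSimpleGroup ↥T := by
    refine ⟨fun N hN => ?_⟩
    by_cases hNbot : N = ⊥
    · exact Or.inl hNbot
    · right
      set N₀ := N.map T.subtype with hN₀
      have hN₀ne : N₀ ≠ ⊥ := by
        obtain ⟨a, ha⟩ := Subgroup.ne_bot_iff_exists_ne_one.mp hNbot
        rw [Subgroup.ne_bot_iff_exists_ne_one]
        refine ⟨⟨((a : ↥T) : G), ⟨(a : ↥T), a.2, rfl⟩⟩, ?_⟩
        intro h
        have h' : ((a : ↥T) : G) = 1 := congrArg Subtype.val h
        exact ha (Subtype.ext (Subtype.ext h'))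
      have hN₀T : N₀ ≤ T := by rintro x ⟨y, hy, rfl⟩; exact y.2
      have hchainN : SubChain (fun i => Nat.casesOn i N₀ cT) (nT + 1) := by
        constructor
        · exact hcT.1
        · intro i hi
          cases i with
          | zero =>
            refine ⟨by simpa [h0T] using hN₀T, ?_⟩
            intro x hx y hy
            replace hx : x ∈ T := by rw [← h0T]; exact hx
            replace hy : y ∈ N₀ := hy
            obtain ⟨y', hy', rfl⟩ := hy
            show x * (y' : G) * x⁻¹ ∈ N₀
            refine ⟨⟨x, hx⟩ * y' * ⟨x, hx⟩⁻¹, hN.conj_mem y' hy' ⟨x, hx⟩, rfl⟩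
          | succ j => exact hcT.2 j (by omega)
      have hN₀𝒯 : N₀ ∈ 𝒯 := ⟨hN₀ne, nT + 1, _, rfl, hchainN⟩
      have := hmin hN₀𝒯 hN₀T
      simp only [id] at this
      replace this := le_antisymm hN₀T this
      -- N₀ = T forces N = ⊤
      apply Subgroup.map_injective (Subgroup.subtype_injective T)
      rw [← hN₀, ← this, ← MonoidHom.range_eq_map, Subgroup.range_subtype]
  by_cases habel : ∀ a b : ↥T, a * b = b * a
  · -- abelian: T is solvable, contradiction with trivial radical
    have hsolv : IsSolvable ↥T := by
      constructor
      refine ⟨1, ?_⟩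
      rw [derivedSeries_one]
      rw [commutator_def, eq_bot_iff]
      refine Subgroup.commutator_le.mpr fun a _ b _ => ?_
      rw [Subgroup.mem_bot, commutatorElement_eq_one_iff_commute]
      exact habel a b
    exact hTne (subnormal_solvable_eq_bot nT h1 cT T h0T hcT hsolv)
  · -- nonabelian: T is quasisimple, contradiction with trivial F*
    push_neg at habel
    obtain ⟨a, b, hab⟩ := habel
    have hna : IsNonabelian ↥T := ⟨a, b, hab⟩
    have hcenter : Subgroup.center ↥T = ⊥ := by
      rcases (Subgroup.center ↥T).normal_of_characteristic.eq_bot_or_eq_top with h | h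
      · exact h
      · exact absurd ((Subgroup.mem_center_iff.mp
          (h ▸ Subgroup.mem_top a : a ∈ _)) b).symm hab
    have e : ↥T ⧸ Subgroup.center ↥T ≃* ↥T :=
      (QuotientGroup.quotientMulEquivOfEq hcenter).trans (QuotientGroup.quotientBot (G := ↥T))
    have hquasi : IsQuasisimple ↥T :=
      ⟨perfect_of_simple_nonabelian hsimple hna,
        isSimpleGroup_of_mulEquiv e.symm hsimple, hna.of_mulEquiv e.symm⟩
    obtain ⟨x, hx⟩ := exists_ne (1 : ↥T)
    have hmem : (x : G) ∈ genFitting G :=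
      Subgroup.subset_normalClosure
        (Or.inr ⟨T, isSubnormal_of_subchain h0T hcT, hquasi, x.2⟩)
    rw [h2, Subgroup.mem_bot] at hmem
    exact hx (Subtype.ext hmem)

end RadicalTrivial

section UpperSeries

variable (G : Type u) [Group G]

lemma upperL_zero : upperL G 0 = ⊥ := rfl

lemma upperM_zero : upperM G 0 = ⊥ := rfl

lemma upperM_succ (n : ℕ) : upperM G (n + 1) =
    (solubleRadical (G ⧸ upperL G n)).comap (QuotientGroup.mk' (upperL G n)) := rfl

lemma upperL_succ (n : ℕ) : upperL G (n + 1) =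
    (genFitting (G ⧸ upperM G (n + 1))).comap (QuotientGroup.mk' (upperM G (n + 1))) := rfl

lemma upperL_le_upperM_succ (n : ℕ) : upperL G n ≤ upperM G (n + 1) := by
  rw [upperM_succ]
  intro x hx
  have : QuotientGroup.mk' (upperL G n) x = 1 := (QuotientGroup.eq_one_iff x).mpr hx
  show QuotientGroup.mk' (upperL G n) x ∈ solubleRadical (G ⧸ upperL G n)
  rw [this]
  exact one_mem _

lemma upperM_le_upperL (n : ℕ) : upperM G (n + 1) ≤ upperL G (n + 1) := by
  rw [upperL_succ]
  intro x hx
  have : QuotientGroup.mk' (upperM G (n + 1)) x = 1 := (QuotientGroup.eq_one_iff x).mpr hx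
  show QuotientGroup.mk' (upperM G (n + 1)) x ∈ genFitting _
  rw [this]
  exact one_mem _

lemma upperL_mono (n : ℕ) : upperL G n ≤ upperL G (n + 1) :=
  le_trans (upperL_le_upperM_succ G n) (upperM_le_upperL G n)

lemma normal_map_mulEquiv {A B : Type*} [Group A] [Group B] (e : A ≃* B) {N : Subgroup A}
    (hN : N.Normal) : (N.map e.toMonoidHom).Normal := by
  refine ⟨?_⟩
  rintro x ⟨y, hy, rfl⟩ b
  refine ⟨e.symm b * y * (e.symm b)⁻¹, hN.conj_mem y hy _, ?_⟩
  simp [map_mul, map_inv]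

lemma solubleRadical_map_le {A B : Type*} [Group A] [Group B] [Finite A] (e : A ≃* B) :
    (solubleRadical A).map e.toMonoidHom ≤ solubleRadical B :=
  le_solubleRadical (normal_map_mulEquiv e (solubleRadical_normal A))
    (isSolvable_of_mulEquiv (Subgroup.equivMapOfInjective _ _ e.injective)
      (isSolvable_solubleRadical A))

lemma solubleRadical_eq_bot_of_mulEquiv {A B : Type*} [Group A] [Group B] [Finite A]
    (e : A ≃* B) (h : solubleRadical B = ⊥) : solubleRadical A = ⊥ := by
  have h1 := solubleRadical_map_le e
  rw [h, le_bot_iff] at h1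
  rw [eq_bot_iff]
  intro x hx
  have : e x ∈ (solubleRadical A).map e.toMonoidHom := ⟨x, hx, rfl⟩
  rw [h1, Subgroup.mem_bot] at this
  rw [Subgroup.mem_bot]
  exact e.injective (by rw [map_one]; exact this)

lemma upperL_reaches_top [Finite G] : ∃ n, upperL G n = ⊤ := by
  -- first find a stalling point
  have hstall : ∃ n, upperL G n = upperL G (n + 1) := by
    by_contra hcon
    push_neg at hcon
    have hstrict : StrictMono (fun n => Nat.card ↥(upperL G n)) := by
      apply strictMono_nat_of_lt_succ
      intro n
      have hlt : upperL G n < upperL G (n + 1) := lt_of_le_of_ne (upperL_mono G n) (hcon n)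
      have hsub : ((upperL G n : Set G)) ⊂ (upperL G (n + 1) : Set G) :=
        Set.ssubset_iff_of_subset (fun x hx => upperL_mono G n hx) |>.mpr
          (by
            obtain ⟨x, hx1, hx2⟩ := SetLike.exists_of_lt hlt
            exact ⟨x, hx1, hx2⟩)
      calc Nat.card ↥(upperL G n) = (upperL G n : Set G).ncard := Nat.card_coe_set_eq _
        _ < (upperL G (n + 1) : Set G).ncard := Set.ncard_lt_ncard hsub (Set.toFinite _)
        _ = Nat.card ↥(upperL G (n + 1)) := (Nat.card_coe_set_eq _).symm
    have h1 : ∀ n, n ≤ Nat.card ↥(upperL G n) := fun n => hstrict.le_apply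
    have h2 : Nat.card ↥(upperL G (Nat.card G + 1)) ≤ Nat.card G :=
      Nat.le_of_dvd Nat.card_pos (Subgroup.card_subgroup_dvd_card _)
    have h3 := h1 (Nat.card G + 1)
    omega
  obtain ⟨n, hn⟩ := hstall
  refine ⟨n, ?_⟩
  -- at a stalling point both radicals of the quotient vanish
  have hML : upperM G (n + 1) = upperL G n :=
    le_antisymm ((upperM_le_upperL G n).trans hn.ge) (upperL_le_upperM_succ G n)
  have hLM : upperL G (n + 1) = upperM G (n + 1) :=
    le_antisymm (hn.symm.le.trans (upperL_le_upperM_succ G n)) (upperM_le_upperL G n)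
  -- soluble radical of G ⧸ upperL G n is trivial
  have hsolrad : solubleRadical (G ⧸ upperL G n) = ⊥ := by
    apply Subgroup.comap_injective (QuotientGroup.mk'_surjective (upperL G n))
    rw [← upperM_succ, hML]
    ext x
    simp only [Subgroup.mem_comap, QuotientGroup.mk'_apply, Subgroup.mem_bot]
    exact ⟨fun h => (QuotientGroup.eq_one_iff x).mpr h, fun h => (QuotientGroup.eq_one_iff x).mp h⟩
  -- generalized Fitting subgroup of G ⧸ upperM G (n+1) is trivial
  have hgf : genFitting (G ⧸ upperM G (n + 1)) = ⊥ := by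
    apply Subgroup.comap_injective (QuotientGroup.mk'_surjective (upperM G (n + 1)))
    rw [← upperL_succ, hLM]
    ext x
    simp only [Subgroup.mem_comap, QuotientGroup.mk'_apply, Subgroup.mem_bot]
    exact ⟨fun h => (QuotientGroup.eq_one_iff x).mpr h, fun h => (QuotientGroup.eq_one_iff x).mp h⟩
  -- transport the soluble radical statement
  have hsolrad' : solubleRadical (G ⧸ upperM G (n + 1)) = ⊥ :=
    solubleRadical_eq_bot_of_mulEquiv (QuotientGroup.quotientMulEquivOfEq hML) hsolrad
  have hsub : Subsingleton (G ⧸ upperM G (n + 1)) :=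
    subsingleton_of_radicals_eq_bot hsolrad' hgf
  have htop : upperM G (n + 1) = ⊤ := by
    rw [eq_top_iff]
    intro x _
    have : QuotientGroup.mk' (upperM G (n + 1)) x = 1 := Subsingleton.elim _ _
    exact (QuotientGroup.eq_one_iff x).mp this
  rw [← hML]
  exact htop

end UpperSeries

section DerivedSeries

variable {G : Type v} [Group G]

/-- Iterated commutator subgroup of a subgroup. -/
def dser (A : Subgroup G) : ℕ → Subgroup G
  | 0 => A
  | n + 1 => ⁅dser A n, dser A n⁆

lemma dser_mono {A B : Subgroup G} (h : A ≤ B) (n : ℕ) : dser A n ≤ dser B n := by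
  induction n with
  | zero => exact h
  | succ m ih => exact Subgroup.commutator_mono ih ih

lemma dser_map {H : Type*} [Group H] (f : G →* H) (A : Subgroup G) (n : ℕ) :
    (dser A n).map f = dser (A.map f) n := by
  induction n with
  | zero => rfl
  | succ m ih => show (⁅dser A m, dser A m⁆).map f = ⁅dser (A.map f) m, dser (A.map f) m⁆
                 rw [Subgroup.map_commutator, ih]

lemma dser_eq_bot_of_solvable (W : Subgroup G) (h : IsSolvable ↥W) : ∃ m, dser W m = ⊥ := by
  obtain ⟨m, hm⟩ := h.solvable
  refine ⟨m, ?_⟩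
  have key : ∀ j, dser W j = (derivedSeries ↥W j).map W.subtype := by
    intro j
    induction j with
    | zero => show W = _; rw [derivedSeries_zero, ← MonoidHom.range_eq_map,
        Subgroup.range_subtype]
    | succ i ih => show ⁅dser W i, dser W i⁆ = _
                   rw [derivedSeries_succ, Subgroup.map_commutator, ih]
  rw [key m, hm, Subgroup.map_bot]

lemma commutator_sup_le_of_normal (A M : Subgroup G) [hM : M.Normal] :
    ⁅A ⊔ M, A ⊔ M⁆ ≤ ⁅A, A⁆ ⊔ M := by
  set π := QuotientGroup.mk' M with hπ
  have hMbot : M.map π = ⊥ := by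
    rw [eq_bot_iff]
    rintro x ⟨y, hy, rfl⟩
    rw [Subgroup.mem_bot]
    exact (QuotientGroup.eq_one_iff y).mpr hy
  have h1 : (⁅A ⊔ M, A ⊔ M⁆).map π = (⁅A, A⁆).map π := by
    rw [Subgroup.map_commutator, Subgroup.map_sup, hMbot, sup_bot_eq, Subgroup.map_commutator]
  calc ⁅A ⊔ M, A ⊔ M⁆ ≤ ((⁅A ⊔ M, A ⊔ M⁆).map π).comap π := Subgroup.le_comap_map π _
    _ = ((⁅A, A⁆).map π).comap π := by rw [h1]
    _ = ⁅A, A⁆ ⊔ π.ker := Subgroup.comap_map_eq π _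
    _ = ⁅A, A⁆ ⊔ M := by rw [QuotientGroup.ker_mk']

lemma dser_sup_le_of_normal (A M : Subgroup G) [hM : M.Normal] (n : ℕ) :
    dser (A ⊔ M) n ≤ dser A n ⊔ M := by
  induction n with
  | zero => exact le_rfl
  | succ m ih =>
    calc dser (A ⊔ M) (m + 1) = ⁅dser (A ⊔ M) m, dser (A ⊔ M) m⁆ := rfl
      _ ≤ ⁅dser A m ⊔ M, dser A m ⊔ M⁆ := Subgroup.commutator_mono ih ih
      _ ≤ ⁅dser A m, dser A m⁆ ⊔ M := commutator_sup_le_of_normal _ _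

end DerivedSeries

section Lifting

/-- Coprime lifting of fixed points: if `φ` has prime order `p` coprime to `|G|` and a
coset of `M` inside a `φ`-invariant subgroup `F` is `φ`-invariant, it contains a fixed
point of `φ`. -/
lemma exists_fixed_lift {G : Type v} [Group G] [Finite G] (p : ℕ) (hp : p.Prime)
    (phi : MulAut G) (hphi : phi ^ p = 1) (hcop : Nat.Coprime p (Nat.card G))
    (M : Subgroup G) [M.Normal] (psi : MulAut (G ⧸ M))
    (hpsi : ∀ g : G, psi (QuotientGroup.mk' M g) = QuotientGroup.mk' M (phi g))
    (F : Subgroup G) (hF : F.map phi.toMonoidHom = F)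
    (d : G ⧸ M) (hd : psi d = d) (hdF : d ∈ F.map (QuotientGroup.mk' M)) :
    ∃ g : G, g ∈ F ∧ phi g = g ∧ QuotientGroup.mk' M g = d := by
  classical
  haveI := Fact.mk hp
  set π := QuotientGroup.mk' M with hπdef
  -- φ and φ⁻¹ preserve F
  have hFphi : ∀ x ∈ F, phi x ∈ F := by
    intro x hx
    rw [← hF]
    exact ⟨x, hx, rfl⟩
  have hFphiInv : ∀ x ∈ F, phi⁻¹ x ∈ F := by
    intro x hx
    have : x ∈ F.map phi.toMonoidHom := hF.symm ▸ hx
    obtain ⟨y, hy, rfl⟩ := this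
    simpa using hy
  obtain ⟨f₀, hf₀F, hf₀d⟩ := hdF
  -- the finite φ-invariant set Ω
  set Ω := {g : G // g ∈ F ∧ π g = d} with hΩ
  haveI : Finite Ω := Subtype.finite
  haveI : Fintype Ω := Fintype.ofFinite Ω
  have hne : Nonempty Ω := ⟨⟨f₀, hf₀F, hf₀d⟩⟩
  have hψinvd : psi⁻¹ d = d := by
    conv_lhs => rw [← hd]
    simp
  set σ : Equiv.Perm Ω :=
    { toFun := fun g => ⟨phi g, hFphi g g.2.1, by rw [← hpsi g, g.2.2, hd]⟩
      invFun := fun g => ⟨phi⁻¹ g, hFphiInv g g.2.1, by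
        apply psi.injective
        rw [hpsi (phi⁻¹ g)]
        simp only [MulAut.apply_inv_self]
        rw [g.2.2, hd]⟩
      left_inv := fun g => Subtype.ext (by simp)
      right_inv := fun g => Subtype.ext (by simp) } with hσ
  have hσpow : ∀ (m : ℕ) (a : Ω), ((σ ^ m) a : G) = (phi ^ m) a := by
    intro m
    induction m with
    | zero => intro a; simp
    | succ i ih =>
      intro a
      rw [pow_succ, pow_succ]
      have : (σ ^ i * σ) a = (σ ^ i) (σ a) := rfl
      rw [this, ih (σ a)]
      rfl
  have hσp : σ ^ p = 1 := by
    ext a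
    show ((σ ^ p) a : G) = ((1 : Equiv.Perm Ω) a : G)
    rw [hσpow p a, hphi]
    rfl
  -- cardinality is coprime to p
  have hcard : ¬ p ∣ Fintype.card Ω := by
    intro hdvd
    have hbij : Nat.card Ω = Nat.card ↥(M ⊓ F) := by
      have hfwd : ∀ g : Ω, f₀⁻¹ * (g : G) ∈ M ⊓ F := by
        intro g
        refine Subgroup.mem_inf.mpr ⟨?_, mul_mem (inv_mem hf₀F) g.2.1⟩
        have : π (f₀⁻¹ * (g : G)) = 1 := by
          rw [map_mul, map_inv, hf₀d, g.2.2, inv_mul_cancel]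
        exact (QuotientGroup.eq_one_iff _).mp this
      have hbwd : ∀ m : ↥(M ⊓ F), (f₀ * (m : G) ∈ F) ∧ π (f₀ * (m : G)) = d := by
        intro m
        refine ⟨mul_mem hf₀F (Subgroup.mem_inf.mp m.2).2, ?_⟩
        rw [map_mul, hf₀d]
        have : π (m : G) = 1 := (QuotientGroup.eq_one_iff _).mpr (Subgroup.mem_inf.mp m.2).1
        rw [this, mul_one]
      refine Nat.card_congr ⟨fun g => ⟨f₀⁻¹ * g, hfwd g⟩,
        fun m => ⟨f₀ * m, hbwd m⟩, fun g => ?_, fun m => ?_⟩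
      · exact Subtype.ext (by simp)
      · exact Subtype.ext (by simp)
    have hdvd2 : p ∣ Nat.card G := by
      rw [Nat.card_eq_fintype_card] at hbij
      exact dvd_trans (hbij ▸ hdvd) (Subgroup.card_subgroup_dvd_card _)
    exact absurd (Nat.eq_one_of_dvd_coprimes hcop dvd_rfl hdvd2) hp.one_lt.ne'
  obtain ⟨a, ha⟩ := Equiv.Perm.exists_fixed_point_of_prime (n := 1) hcard
    (by rw [pow_one]; exact hσp)
  refine ⟨(a : G), a.2.1, ?_, a.2.2⟩
  exact congrArg Subtype.val ha
end Lifting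

lemma mem_autFixedSubgroup {G : Type*} [Group G] (φ : G ≃* G) (x : G) :
    x ∈ autFixedSubgroup φ ↔ φ x = x := Iff.rfl

section Diagonal

lemma noncommProd_univ_equiv {α M : Type*} [Fintype α] [Monoid M] (e : α ≃ α) (f : α → M)
    (c1 : ((Finset.univ : Finset α) : Set α).Pairwise (Function.onFun Commute (f ∘ e)))
    (c2 : ((Finset.univ : Finset α) : Set α).Pairwise (Function.onFun Commute f)) :
    Finset.univ.noncommProd (f ∘ e) c1 = Finset.univ.noncommProd f c2 := by
  have hms : (Finset.univ.val.map (f ∘ e)) = Finset.univ.val.map f := by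
    conv_rhs => rw [← Finset.map_univ_equiv e]
    show Multiset.map (f ∘ e) Finset.univ.val = Multiset.map f (Multiset.map e Finset.univ.val)
    rw [Multiset.map_map]
  have key : ∀ (m₁ m₂ : Multiset M) (h : m₁ = m₂) (p1 : {x | x ∈ m₁}.Pairwise Commute)
      (p2 : {x | x ∈ m₂}.Pairwise Commute),
      Multiset.noncommProd m₁ p1 = Multiset.noncommProd m₂ p2 := by
    rintro m₁ m₂ rfl p1 p2; rfl
  exact key _ _ hms _ _

variable {H : Type v} [Group H] {p : ℕ}

/-- The diagonal subgroup of the fixed points on a product of simple factors permuted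
cyclically: it is the isomorphic image of the first factor. -/
lemma diagonal_structure (hp : p.Prime) (ψ : MulAut H) (hψ : ψ ^ p = 1)
    (s : ZMod p → Subgroup H)
    (hsimp : ∀ i, IsSimpleGroup ↥(s i)) (hna : ∀ i, IsNonabelian ↥(s i))
    (hchain : ∀ i, ∃ (n : ℕ) (c : ℕ → Subgroup H), c 0 = s i ∧ SubChain c n)
    (horb : ∀ i, (s i).map ψ.toMonoidHom = s (i + 1))
    (hinj : Function.Injective s) :
    ∃ δ : ↥(s 0) →* H, Function.Injective δ ∧
      δ.range = (⨆ j, s j) ⊓ autFixedSubgroup (ψ : H ≃* H) := by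
  classical
  haveI : NeZero p := ⟨hp.ne_zero⟩
  haveI : Fact (1 < p) := ⟨hp.one_lt⟩
  -- distinct factors commute elementwise
  have hcomm : ∀ {i j : ZMod p}, i ≠ j → ∀ x ∈ s i, ∀ y ∈ s j, Commute x y := by
    intro i j hij x hx y hy
    obtain ⟨n, c, h0, hc⟩ := hchain j
    have hbot := subnormal_simples_commute n (s i) (s j) c h0 hc (hchain i)
      (hsimp i) (hna i) (hsimp j) (fun hEq => hij (hinj hEq))
    have := Subgroup.commutator_mem_commutator hx hy
    rw [hbot, Subgroup.mem_bot] at this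
    exact commutatorElement_eq_one_iff_commute.mp this
  have hpair : Pairwise fun i j : ZMod p => ∀ x y : H, x ∈ s i → y ∈ s j → Commute x y :=
    fun i j hij x y hx hy => hcomm hij x hx y hy
  set Φ := Subgroup.noncommPiCoprod hpair with hΦdef
  have hΦrange : Φ.range = ⨆ j, s j := Subgroup.noncommPiCoprod_range
  -- an element of a factor commuting with the whole factor is trivial
  have hcent : ∀ (i : ZMod p) (x : H), x ∈ s i → (∀ y ∈ s i, x * y = y * x) → x = 1 := by
    intro i x hx hxc
    have := eq_one_of_forall_commute (hsimp i) (hna i) ⟨x, hx⟩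
      (fun y => Subtype.ext (hxc y y.2))
    exact congrArg Subtype.val this
  -- independence
  have hind : iSupIndep s := by
    intro i
    rw [disjoint_iff_inf_le]
    intro x hx
    have hxi : x ∈ s i := hx.1
    have hxsup : x ∈ ⨆ (j) (_ : j ≠ i), s j := hx.2
    have hcsub : (⨆ (j) (_ : j ≠ i), s j) ≤ Subgroup.centralizer (s i : Set H) := by
      refine iSup_le fun j => iSup_le fun hj => ?_
      intro y hy
      rw [Subgroup.mem_centralizer_iff]
      intro z hz
      exact (hcomm hj y hy z hz).symm.eq
    have hxc := Subgroup.mem_centralizer_iff.mp (hcsub hxsup)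
    rw [Subgroup.mem_bot]
    exact hcent i x hxi fun y hy => (hxc y hy).symm
  have hΦinj : Function.Injective Φ :=
    Subgroup.injective_noncommPiCoprod_of_iSupIndep (hcomm := hpair) hind
  -- ψ-power membership
  have hmem_pow : ∀ (n : ℕ) (i : ZMod p) (a : H), a ∈ s i → (ψ ^ n) a ∈ s (i + n) := by
    intro n
    induction n with
    | zero => intro i a ha; simpa using ha
    | succ m ih =>
      intro i a ha
      have h1 : (ψ ^ (m + 1)) a = ψ ((ψ ^ m) a) := by
        rw [pow_succ']
        rfl
      rw [h1]
      have h2 : ψ ((ψ ^ m) a) ∈ (s (i + m)).map ψ.toMonoidHom := ⟨_, ih i a ha, rfl⟩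
      rw [horb] at h2
      have : i + (m : ZMod p) + 1 = i + ((m + 1 : ℕ) : ZMod p) := by push_cast; ring
      rwa [this] at h2
  -- powers of ψ depend only on the exponent mod p
  have hψmod : ∀ m l : ℕ, m % p = l % p → (ψ ^ m : MulAut H) = ψ ^ l := by
    intro m l h
    have hdvd : orderOf ψ ∣ p := orderOf_dvd_of_pow_eq_one hψ
    calc ψ ^ m = ψ ^ (m % orderOf ψ) := (pow_mod_orderOf ψ m).symm
      _ = ψ ^ (m % p % orderOf ψ) := by rw [Nat.mod_mod_of_dvd m hdvd]
      _ = ψ ^ (l % p % orderOf ψ) := by rw [h]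
      _ = ψ ^ (l % orderOf ψ) := by rw [Nat.mod_mod_of_dvd l hdvd]
      _ = ψ ^ l := pow_mod_orderOf ψ l
  -- the shift on tuples
  have hshiftmem : ∀ (x : ∀ j, ↥(s j)) (j : ZMod p), ψ (x (j - 1) : H) ∈ s j := by
    intro x j
    have h2 : ψ ((x (j-1) : H)) ∈ (s (j-1)).map ψ.toMonoidHom := ⟨_, (x (j-1)).2, rfl⟩
    rwa [horb, sub_add_cancel] at h2
  set shift : (∀ j, ↥(s j)) → (∀ j, ↥(s j)) :=
    fun x j => ⟨ψ (x (j - 1) : H), hshiftmem x j⟩ with hshiftdef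
  have hshift : ∀ x, ψ (Φ x) = Φ (shift x) := by
    intro x
    have hL : ψ (Φ x) = Finset.univ.noncommProd (fun i => ψ.toMonoidHom ((x i : H)))
        (fun a _ b _ hab => by
          exact ((hpair hab) _ _ (x a).2 (x b).2).map ψ.toMonoidHom) := by
      rw [Subgroup.noncommPiCoprod_apply hpair]
      exact Finset.map_noncommProd Finset.univ _ _ ψ.toMonoidHom
    have hR := Subgroup.noncommPiCoprod_apply hpair (shift x)
    rw [hL, hR]
    exact (noncommProd_univ_equiv (Equiv.subRight (1 : ZMod p))
      (fun i : ZMod p => ψ.toMonoidHom ((x i : H))) _ _).symm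
  -- the diagonal homomorphism
  have hdiagmem : ∀ (a : ↥(s 0)) (j : ZMod p), ((ψ ^ j.val) (a : H)) ∈ s j := by
    intro a j
    have := hmem_pow j.val 0 (a : H) a.2
    rwa [zero_add, ZMod.natCast_rightInverse j] at this
  set diag : ↥(s 0) →* (∀ j, ↥(s j)) :=
    MonoidHom.mk' (fun a => fun j => ⟨(ψ ^ j.val) (a : H), hdiagmem a j⟩)
      (by intro a b
          funext j
          exact Subtype.ext (map_mul _ _ _)) with hdiagdef
  set δ : ↥(s 0) →* H := Φ.comp diag with hδdef
  have hδeval : ∀ a, δ a = Φ (diag a) := fun a => rfl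
  have hδinj : Function.Injective δ := by
    intro a b hab
    have h1 : diag a = diag b := hΦinj hab
    have h2 := congrFun h1 0
    have h3 : ((ψ ^ (0 : ZMod p).val) (a : H)) = ((ψ ^ (0 : ZMod p).val) (b : H)) :=
      congrArg Subtype.val h2
    rw [ZMod.val_zero, pow_zero] at h3
    exact Subtype.ext h3
  -- δ lands in the fixed points
  have hshift_diag : ∀ a : ↥(s 0), shift (diag a) = diag a := by
    intro a
    funext j
    apply Subtype.ext
    show ψ ((ψ ^ (j - 1).val) (a : H)) = (ψ ^ j.val) (a : H)
    have h1 : ψ ((ψ ^ (j - 1).val) (a : H)) = (ψ ^ ((j - 1).val + 1)) (a : H) := by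
      rw [pow_succ']
      rfl
    rw [h1]
    have h2 : ((j - 1).val + 1) % p = j.val % p := by
      have h3 : ((j - 1) + 1 : ZMod p).val = ((j - 1).val + (1 : ZMod p).val) % p :=
        ZMod.val_add _ _
      rw [sub_add_cancel, ZMod.val_one] at h3
      rw [← h3, Nat.mod_eq_of_lt (ZMod.val_lt j)]
    rw [hψmod _ _ h2]
  have hfix : ∀ a : ↥(s 0), ψ (δ a) = δ a := by
    intro a
    rw [hδeval, hshift, hshift_diag]
  refine ⟨δ, hδinj, le_antisymm ?_ ?_⟩
  · rintro x ⟨a, rfl⟩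
    refine Subgroup.mem_inf.mpr ⟨?_, hfix a⟩
    rw [← hΦrange]
    exact ⟨diag a, rfl⟩
  · intro d hd
    obtain ⟨hd1, hd2⟩ := Subgroup.mem_inf.mp hd
    rw [← hΦrange] at hd1
    obtain ⟨x, rfl⟩ := hd1
    have hfixx : ψ (Φ x) = Φ x := hd2
    have hx : shift x = x := hΦinj ((hshift x).symm.trans hfixx)
    have hxn : ∀ n : ℕ, (x ((n : ℕ) : ZMod p) : H) = (ψ ^ n) (x 0 : H) := by
      intro n
      induction n with
      | zero => rw [Nat.cast_zero, pow_zero]; rfl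
      | succ m ih =>
        have h1 := congrFun hx (((m + 1 : ℕ) : ZMod p))
        have h2 : ψ (x (((m + 1 : ℕ) : ZMod p) - 1) : H) = (x ((m + 1 : ℕ) : ZMod p) : H) :=
          congrArg Subtype.val h1
        have h3 : (((m + 1 : ℕ) : ZMod p) - 1) = ((m : ℕ) : ZMod p) := by push_cast; ring
        rw [h3, ih] at h2
        rw [← h2, pow_succ']
        rfl
    have hxdiag : x = diag (x 0) := by
      funext j
      apply Subtype.ext
      show (x j : H) = (ψ ^ j.val) (x 0 : H)
      conv_lhs => rw [← ZMod.natCast_rightInverse j]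
      exact hxn j.val
    exact ⟨x 0, by rw [hδeval, ← hxdiag]⟩

end Diagonal

/-- **Lemma.** In the situation of the paper: `G` is finite, `φ` has prime order `p`
coprime to `|G|`, `[G, φ] = G`; `ψ` is the automorphism of `G/M_k` induced by `φ`;
`{s i}` (for `i : ZMod p`) is a nontrivial `φ`-orbit among the subnormal simple
factors of `U_k = L_k/M_k`, `S = s 0 × … × s (p-1)` is their product and
`D = C_S(φ)` the diagonal subgroup.  Then there is an index `i` such that for every
`φ`-invariant subgroup `F ≤ G` with `F·M_k/M_k ≥ D` there is a subgroup
`D̂ ≤ C_F(φ)` with (1) `D̂·M_k/M_k = D`, (2) `D̂ ≤ λ_i·M_k`, and (3) `D̂ ≰ μ_i·M_k`,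
where `(μ_i, λ_i)` is the upper nonsoluble series of `C_G(φ)`. -/
theorem exists_index_lifting_diagonal
    (G : Type u) [Group G] [Finite G] (p : ℕ) (hp : p.Prime) (phi : MulAut G)
    (hord : orderOf phi = p) (hcop : Nat.Coprime p (Nat.card G))
    (hcomm : autCommutator phi = ⊤)
    (k : ℕ) (hk : 1 ≤ k)
    (psi : MulAut (G ⧸ upperM G k))
    (hpsi : ∀ g : G, psi (QuotientGroup.mk' (upperM G k) g) =
      QuotientGroup.mk' (upperM G k) (phi g))
    (s : ZMod p → Subgroup (G ⧸ upperM G k))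
    (hfac : ∀ i, IsSubnormal (s i) ∧ IsSimpleGroup ↥(s i) ∧ IsNonabelian ↥(s i))
    (horb : ∀ i, (s i).map psi.toMonoidHom = s (i + 1))
    (hinj : Function.Injective s) :
    ∃ i : ℕ, ∀ F : Subgroup G, F.map phi.toMonoidHom = F →
      (⨆ j, s j) ⊓ autFixedSubgroup psi ≤ F.map (QuotientGroup.mk' (upperM G k)) →
      ∃ Dh : Subgroup G, Dh ≤ F ⊓ autFixedSubgroup phi ∧
        Dh.map (QuotientGroup.mk' (upperM G k)) = (⨆ j, s j) ⊓ autFixedSubgroup psi ∧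
        Dh ≤ (upperL ↥(autFixedSubgroup phi) i).map (autFixedSubgroup phi).subtype ⊔
          upperM G k ∧
        ¬ Dh ≤ (upperM ↥(autFixedSubgroup phi) i).map (autFixedSubgroup phi).subtype ⊔
          upperM G k := by
  classical
  haveI : NeZero p := ⟨hp.ne_zero⟩
  set π := QuotientGroup.mk' (upperM G k) with hπdef
  have hphp : phi ^ p = 1 := by rw [← hord]; exact pow_orderOf_eq_one phi
  have hpsipow : ∀ (n : ℕ) (g : G), (psi ^ n) (π g) = π ((phi ^ n) g) := by
    intro n
    induction n with
    | zero => intro g; rfl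
    | succ m ih =>
      intro g
      have h1 : (psi ^ (m + 1)) (π g) = psi ((psi ^ m) (π g)) := by rw [pow_succ']; rfl
      have h2 : (phi ^ (m + 1)) g = phi ((phi ^ m) g) := by rw [pow_succ']; rfl
      rw [h1, ih, hpsi, h2]
  have hpsip : psi ^ p = 1 := by
    ext q
    induction q using QuotientGroup.induction_on with
    | H g =>
      show (psi ^ p) (π g) = (1 : MulAut (G ⧸ upperM G k)) (π g)
      rw [hpsipow p g, hphp]
      rfl
  have hsimp : ∀ i, IsSimpleGroup ↥(s i) := fun i => (hfac i).2.1
  have hnab : ∀ i, IsNonabelian ↥(s i) := fun i => (hfac i).2.2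
  have hchain : ∀ i, ∃ (n : ℕ) (c : ℕ → Subgroup (G ⧸ upperM G k)), c 0 = s i ∧ SubChain c n :=
    fun i => subchain_of_isSubnormal (hfac i).1
  obtain ⟨δ, hδinj, hδrange⟩ := diagonal_structure hp psi hpsip s hsimp hnab hchain horb hinj
  set D := (⨆ j, s j) ⊓ autFixedSubgroup (psi : (G ⧸ upperM G k) ≃* (G ⧸ upperM G k))
    with hDdef
  haveI : Nontrivial ↥(s 0) := (hsimp 0).toNontrivial
  have hDne : D ≠ ⊥ := by
    obtain ⟨a, ha⟩ := exists_ne (1 : ↥(s 0))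
    intro hbot
    have hmem : δ a ∈ D := by rw [← hδrange]; exact ⟨a, rfl⟩
    rw [hbot, Subgroup.mem_bot] at hmem
    exact ha (hδinj (by rw [hmem, map_one]))
  have hDperf : ⁅D, D⁆ = D := by
    calc ⁅D, D⁆ = ⁅(⊤ : Subgroup ↥(s 0)).map δ, (⊤ : Subgroup ↥(s 0)).map δ⁆ := by
          rw [← MonoidHom.range_eq_map, hδrange]
      _ = (⁅(⊤ : Subgroup ↥(s 0)), (⊤ : Subgroup ↥(s 0))⁆).map δ :=
          (Subgroup.map_commutator _ _ _).symm
      _ = ((⊤ : Subgroup ↥(s 0))).map δ := by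
          rw [← commutator_def, perfect_of_simple_nonabelian (hsimp 0) (hnab 0)]
      _ = D := by rw [← MonoidHom.range_eq_map, hδrange]
  set C := autFixedSubgroup (phi : G ≃* G) with hCdef
  set K := C ⊓ Subgroup.comap π D with hKdef
  have hKC : K ≤ C := inf_le_left
  have hlift : ∀ F : Subgroup G, F.map phi.toMonoidHom = F → D ≤ F.map π →
      (F ⊓ K).map π = D := by
    intro F hF hDF
    apply le_antisymm
    · rintro x ⟨g, hg, rfl⟩
      exact hg.2.2
    · intro d hd
      have hdfix : psi d = d := (Subgroup.mem_inf.mp hd).2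
      obtain ⟨g, hgF, hgfix, hgd⟩ := exists_fixed_lift p hp phi hphp hcop (upperM G k)
        psi hpsi F hF d hdfix (hDF hd)
      refine ⟨g, ⟨hgF, ⟨hgfix, ?_⟩⟩, hgd⟩
      show π g ∈ D
      rw [hgd]
      exact hd
  have hKmap : K.map π = D := by
    have htop : (⊤ : Subgroup G).map phi.toMonoidHom = ⊤ := by
      rw [← MonoidHom.range_eq_map]
      exact MonoidHom.range_eq_top_of_surjective _ phi.surjective
    have htop2 : D ≤ (⊤ : Subgroup G).map π := by
      rw [← MonoidHom.range_eq_map]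
      rw [MonoidHom.range_eq_top_of_surjective _ (QuotientGroup.mk'_surjective _)]
      exact le_top
    have h := hlift ⊤ htop htop2
    rwa [top_inf_eq] at h
  have hMmapbot : (upperM G k).map π = ⊥ := by
    rw [eq_bot_iff]
    rintro x ⟨y, hy, rfl⟩
    rw [Subgroup.mem_bot]
    exact (QuotientGroup.eq_one_iff y).mpr hy
  -- the index set
  set I := {n : ℕ | K ≤ (upperL ↥C n).map C.subtype ⊔ upperM G k} with hIdef
  have hInonempty : I.Nonempty := by
    obtain ⟨N, hN⟩ := upperL_reaches_top ↥C
    refine ⟨N, ?_⟩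
    show K ≤ (upperL ↥C N).map C.subtype ⊔ upperM G k
    rw [hN]
    calc K ≤ C := hKC
      _ = (⊤ : Subgroup ↥C).map C.subtype := by
          rw [← MonoidHom.range_eq_map, Subgroup.range_subtype]
      _ ≤ _ := le_sup_left
  refine ⟨sInf I, fun F hF hDF => ?_⟩
  have hmapD := hlift F hF hDF
  refine ⟨F ⊓ K, inf_le_inf_left F hKC, hmapD, ?_, ?_⟩
  · calc F ⊓ K ≤ K := inf_le_right
      _ ≤ _ := Nat.sInf_mem hInonempty
  · intro hle
    have hPK : K ≤ (F ⊓ K) ⊔ upperM G k := by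
      have h1 : K ≤ Subgroup.comap π D := inf_le_right
      have h2 : Subgroup.comap π D = (F ⊓ K) ⊔ upperM G k := by
        rw [← hmapD, Subgroup.comap_map_eq, QuotientGroup.ker_mk']
      rw [← h2]
      exact h1
    have hKQ : K ≤ (upperM ↥C (sInf I)).map C.subtype ⊔ upperM G k :=
      hPK.trans (sup_le hle le_sup_right)
    cases hI2 : sInf I with
    | zero =>
      rw [hI2, upperM_zero, Subgroup.map_bot, bot_sup_eq] at hKQ
      have hDbot : D ≤ ⊥ := by
        rw [← hKmap]
        rintro x ⟨g, hg, rfl⟩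
        rw [Subgroup.mem_bot]
        exact (QuotientGroup.eq_one_iff g).mpr (hKQ hg)
      exact hDne (le_bot_iff.mp hDbot)
    | succ j =>
      rw [hI2] at hKQ hle
      obtain ⟨m, hm⟩ := dser_eq_bot_of_solvable (solubleRadical (↥C ⧸ upperL ↥C j))
        (isSolvable_solubleRadical _)
      have hμ : dser (upperM ↥C (j + 1)) m ≤ upperL ↥C j := by
        have hmapbot : (dser (upperM ↥C (j + 1)) m).map (QuotientGroup.mk' (upperL ↥C j))
            = ⊥ := by
          rw [dser_map, upperM_succ,
            Subgroup.map_comap_eq_self_of_surjective (QuotientGroup.mk'_surjective _), hm]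
        intro x hx
        have hx2 : QuotientGroup.mk' (upperL ↥C j) x ∈ (⊥ : Subgroup _) := by
          rw [← hmapbot]
          exact ⟨x, hx, rfl⟩
        rw [Subgroup.mem_bot] at hx2
        exact (QuotientGroup.eq_one_iff x).mp hx2
      set P := (F ⊓ K) ⊔ upperM G k with hPdef
      have hPmap : P.map π = D := by
        rw [hPdef, Subgroup.map_sup, hmapD, hMmapbot, sup_bot_eq]
      have hPperf : ∀ l : ℕ, P ≤ dser P l ⊔ upperM G k := by
        intro l
        induction l with
        | zero => exact le_sup_left
        | succ t ih =>
          have hcomm2 : P ≤ ⁅P, P⁆ ⊔ upperM G k := by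
            have h1 : (⁅P, P⁆).map π = P.map π := by
              rw [Subgroup.map_commutator, hPmap, hDperf]
            calc P ≤ ((P.map π)).comap π := Subgroup.le_comap_map π P
              _ = ((⁅P, P⁆).map π).comap π := by rw [h1]
              _ = ⁅P, P⁆ ⊔ upperM G k := by rw [Subgroup.comap_map_eq, QuotientGroup.ker_mk']
          calc P ≤ ⁅P, P⁆ ⊔ upperM G k := hcomm2
            _ ≤ ⁅dser P t ⊔ upperM G k, dser P t ⊔ upperM G k⁆ ⊔ upperM G k :=
              sup_le_sup_right (Subgroup.commutator_mono ih ih) _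
            _ ≤ (⁅dser P t, dser P t⁆ ⊔ upperM G k) ⊔ upperM G k :=
              sup_le_sup_right (commutator_sup_le_of_normal _ _) _
            _ = dser P (t + 1) ⊔ upperM G k := by
              rw [sup_assoc, sup_idem]
              rfl
      have hPQ : P ≤ (upperM ↥C (j + 1)).map C.subtype ⊔ upperM G k :=
        sup_le hle le_sup_right
      have hdserP : dser P m ≤ (upperL ↥C j).map C.subtype ⊔ upperM G k := by
        calc dser P m ≤ dser ((upperM ↥C (j + 1)).map C.subtype ⊔ upperM G k) m :=
              dser_mono hPQ m
          _ ≤ dser ((upperM ↥C (j + 1)).map C.subtype) m ⊔ upperM G k :=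
              dser_sup_le_of_normal _ _ m
          _ = (dser (upperM ↥C (j + 1)) m).map C.subtype ⊔ upperM G k := by rw [dser_map]
          _ ≤ (upperL ↥C j).map C.subtype ⊔ upperM G k :=
              sup_le_sup_right (Subgroup.map_mono hμ) _
      have hKLj : K ≤ (upperL ↥C j).map C.subtype ⊔ upperM G k := by
        calc K ≤ P := hPK
          _ ≤ dser P m ⊔ upperM G k := hPperf m
          _ ≤ ((upperL ↥C j).map C.subtype ⊔ upperM G k) ⊔ upperM G k :=
              sup_le_sup_right hdserP _
          _ = (upperL ↥C j).map C.subtype ⊔ upperM G k := by rw [sup_assoc, sup_idem]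
      have hjI : j ∈ I := hKLj
      have := Nat.sInf_le hjI
      omega
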